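/- Let T : E → E be contractive-like with constant δ and fixed point p, E convex, and fix k ≥ 2 with sequences {β_n^i} ⊂ [0,1). With the multistep auxiliary sequences y_n^{k−1} = (1−β_n^{k−1}) x_n + β_n^{k−1} T x_n and y_n^i = (1−β_n^i) y_n^{i+1} + β_n^i T y_n^{i+1}, one has ‖y_n^1 − T y_n^1‖ ≤ (1 + δ) ∏_{i=1}^{k−1} [1 − β_n^i(1 − δ)] ‖x_n − p‖ ≤ (1 + δ)‖x_n − p‖. -/

import Mathlib

open Filter Topology

theorem multistep_auxiliary_estimate
    {X : Type*} [NormedAddCommGroup X] [NormedSpace ℝ X]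
    (E : Set X) (hEco : Convex ℝ E) (T : X → X) (hT : Set.MapsTo T E E)
    (δ : ℝ) (hδ : δ ∈ Set.Ico (0 : ℝ) 1)
    (φ : ℝ → ℝ) (hφmono : StrictMonoOn φ (Set.Ici 0))
    (hφcont : ContinuousOn φ (Set.Ici 0)) (hφ0 : φ 0 = 0)
    (hcontr : ∀ x ∈ E, ∀ y ∈ E, ‖T x - T y‖ ≤ δ * ‖x - y‖ + φ ‖x - T x‖)
    (p : X) (hp : p ∈ E) (hTp : T p = p)
    (k : ℕ) (hk : 2 ≤ k)
    (β : ℕ → ℝ) (hβ : ∀ i, β i ∈ Set.Ico (0 : ℝ) 1)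
    (x : X) (hx : x ∈ E) (y : ℕ → X)
    (hyk : y (k - 1) = (1 - β (k - 1)) • x + β (k - 1) • T x)
    (hyi : ∀ i, 1 ≤ i → i ≤ k - 2 →
      y i = (1 - β i) • y (i + 1) + β i • T (y (i + 1))) :
    ‖y 1 - T (y 1)‖ ≤
        (1 + δ) * (∏ i ∈ Finset.Icc 1 (k - 1), (1 - β i * (1 - δ))) * ‖x - p‖ ∧
    (1 + δ) * (∏ i ∈ Finset.Icc 1 (k - 1), (1 - β i * (1 - δ))) * ‖x - p‖ ≤
        (1 + δ) * ‖x - p‖ := by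
  obtain ⟨hδ0, hδ1⟩ := hδ
  -- T z is δ-close to p
  have hTc : ∀ z ∈ E, ‖T z - p‖ ≤ δ * ‖z - p‖ := by
    intro z hz
    have h := hcontr p hp z hz
    rw [hTp] at h
    simp only [sub_self, norm_zero, hφ0, add_zero] at h
    calc ‖T z - p‖ = ‖p - T z‖ := norm_sub_rev _ _
      _ ≤ δ * ‖p - z‖ := h
      _ = δ * ‖z - p‖ := by rw [norm_sub_rev]
  have hfac : ∀ i, 0 ≤ 1 - β i * (1 - δ) ∧ 1 - β i * (1 - δ) ≤ 1 := by
    intro i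
    obtain ⟨h0, h1⟩ := hβ i
    constructor <;> nlinarith
  -- one step
  have hstep : ∀ z ∈ E, ∀ b : ℝ, b ∈ Set.Ico (0 : ℝ) 1 →
      ((1 - b) • z + b • T z ∈ E ∧
        ‖((1 - b) • z + b • T z) - p‖ ≤ (1 - b * (1 - δ)) * ‖z - p‖) := by
    intro z hz b ⟨hb0, hb1⟩
    refine ⟨hEco hz (hT hz) (by linarith) hb0 (by ring), ?_⟩
    have h1 : ((1 - b) • z + b • T z) - p = (1 - b) • (z - p) + b • (T z - p) := by
      module
    rw [h1]
    calc ‖(1 - b) • (z - p) + b • (T z - p)‖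
        ≤ ‖(1 - b) • (z - p)‖ + ‖b • (T z - p)‖ := norm_add_le _ _
      _ = (1 - b) * ‖z - p‖ + b * ‖T z - p‖ := by
          rw [norm_smul, norm_smul, Real.norm_eq_abs, Real.norm_eq_abs,
            abs_of_nonneg (by linarith), abs_of_nonneg hb0]
      _ ≤ (1 - b) * ‖z - p‖ + b * (δ * ‖z - p‖) := by
          gcongr
          exact hTc z hz
      _ = (1 - b * (1 - δ)) * ‖z - p‖ := by ring
  -- backward induction
  have claim : ∀ m, m ≤ k - 2 → (y (k - 1 - m) ∈ E ∧
      ‖y (k - 1 - m) - p‖ ≤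
        (∏ j ∈ Finset.Icc (k - 1 - m) (k - 1), (1 - β j * (1 - δ))) * ‖x - p‖) := by
    intro m
    induction m with
    | zero =>
      intro _
      simp only [Nat.sub_zero]
      obtain ⟨hmem, hbd⟩ := hstep x hx (β (k - 1)) (hβ (k - 1))
      rw [← hyk] at hmem hbd
      rw [Finset.Icc_self, Finset.prod_singleton]
      exact ⟨hmem, hbd⟩
    | succ m ih =>
      intro hm
      obtain ⟨hmem, hbd⟩ := ih (by omega)
      set i := k - 1 - (m + 1) with hi
      have hi1 : 1 ≤ i := by omega
      have hi2 : i ≤ k - 2 := by omega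
      have hsucc : i + 1 = k - 1 - m := by omega
      have hyrw := hyi i hi1 hi2
      rw [hsucc] at hyrw
      obtain ⟨hmem', hbd'⟩ := hstep _ hmem (β i) (hβ i)
      rw [← hyrw] at hmem' hbd'
      refine ⟨hmem', ?_⟩
      have hset : Finset.Icc i (k - 1) = insert i (Finset.Icc (k - 1 - m) (k - 1)) := by
        rw [← hsucc, Finset.Icc_add_one_left_eq_Ioc, Finset.Ioc_insert_left (by omega)]
      have hprod : (∏ j ∈ Finset.Icc i (k - 1), (1 - β j * (1 - δ)))
          = (1 - β i * (1 - δ)) * ∏ j ∈ Finset.Icc (k - 1 - m) (k - 1), (1 - β j * (1 - δ)) := by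
        rw [hset, Finset.prod_insert (by simp only [Finset.mem_Icc]; omega)]
      rw [hprod, mul_assoc]
      calc ‖y i - p‖ ≤ (1 - β i * (1 - δ)) * ‖y (k - 1 - m) - p‖ := hbd'
        _ ≤ (1 - β i * (1 - δ)) *
            ((∏ j ∈ Finset.Icc (k - 1 - m) (k - 1), (1 - β j * (1 - δ))) * ‖x - p‖) := by
            exact mul_le_mul_of_nonneg_left hbd (hfac i).1
  obtain ⟨h1mem, h1bd⟩ := claim (k - 2) le_rfl
  rw [show k - 1 - (k - 2) = 1 by omega] at h1mem h1bd
  have hprodnn : 0 ≤ ∏ j ∈ Finset.Icc 1 (k - 1), (1 - β j * (1 - δ)) :=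
    Finset.prod_nonneg fun j _ => (hfac j).1
  constructor
  · calc ‖y 1 - T (y 1)‖ ≤ ‖y 1 - p‖ + ‖p - T (y 1)‖ := by
          rw [show y 1 - T (y 1) = (y 1 - p) + (p - T (y 1)) by abel]
          exact norm_add_le _ _
      _ = ‖y 1 - p‖ + ‖T (y 1) - p‖ := by rw [norm_sub_rev p]
      _ ≤ ‖y 1 - p‖ + δ * ‖y 1 - p‖ := by gcongr; exact hTc _ h1mem
      _ = (1 + δ) * ‖y 1 - p‖ := by ring
      _ ≤ (1 + δ) * ((∏ i ∈ Finset.Icc 1 (k - 1), (1 - β i * (1 - δ))) * ‖x - p‖) := by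
          exact mul_le_mul_of_nonneg_left h1bd (by linarith)
      _ = (1 + δ) * (∏ i ∈ Finset.Icc 1 (k - 1), (1 - β i * (1 - δ))) * ‖x - p‖ := by ring
  · have hprod1 : (∏ j ∈ Finset.Icc 1 (k - 1), (1 - β j * (1 - δ))) ≤ 1 :=
      Finset.prod_le_one (fun j _ => (hfac j).1) (fun j _ => (hfac j).2)
    have hxn := norm_nonneg (x - p)
    calc (1 + δ) * (∏ i ∈ Finset.Icc 1 (k - 1), (1 - β i * (1 - δ))) * ‖x - p‖
        ≤ (1 + δ) * 1 * ‖x - p‖ := by gcongr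
      _ = (1 + δ) * ‖x - p‖ := by ring
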